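/- Let X_a, Y_a (a ∈ A, A a finite set) be Hermitian positive semidefinite d×d complex matrices such that Σ_a X_a = Σ_a Y_a = K with ⟨K,K⟩ = 1 (where ⟨M,N⟩ = Tr(M*N)), and suppose Σ_a ⟨X_a, Y_a⟩ = 1. Then X_a = Y_a for all a ∈ A. -/

import Mathlib

open Matrix ComplexOrder

private lemma psd_trace_nonneg {d : ℕ} {M : Matrix (Fin d) (Fin d) ℂ} (h : M.PosSemidef) :
    0 ≤ M.trace := by
  rw [Matrix.trace]
  apply Finset.sum_nonneg
  intro i _
  exact h.diag_nonneg

private lemma trace_mul_psd_nonneg {d : ℕ} {P Q : Matrix (Fin d) (Fin d) ℂ}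
    (hP : P.PosSemidef) (hQ : Q.PosSemidef) : 0 ≤ (Pᴴ * Q).trace := by
  rw [hP.1]
  open scoped MatrixOrder in obtain ⟨B, rfl⟩ := CStarAlgebra.nonneg_iff_eq_star_mul_self.mp hQ.nonneg
  rw [← Matrix.mul_assoc, Matrix.trace_mul_cycle]
  exact psd_trace_nonneg (hP.mul_mul_conjTranspose_same B)

private lemma eq_zero_of_trace_conjTranspose_mul_self {d : ℕ}
    {M : Matrix (Fin d) (Fin d) ℂ} (h : (Mᴴ * M).trace = 0) : M = 0 := by
  ext i j
  have hd : (Mᴴ * M).trace = ∑ j, ∑ i, (starRingEnd ℂ) (M i j) * M i j := by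
    simp [Matrix.trace, Matrix.mul_apply, Matrix.diag, conjTranspose_apply]
  rw [hd] at h
  have h' : ∑ p : Fin d × Fin d, (starRingEnd ℂ) (M p.1 p.2) * M p.1 p.2 = 0 := by
    rw [← h, Finset.sum_comm]; rw [Fintype.sum_prod_type]
  have h0 := (Finset.sum_eq_zero_iff_of_nonneg
    (fun p _ => star_mul_self_nonneg (M p.1 p.2))).mp h' (i, j) (Finset.mem_univ _)
  rw [← Complex.normSq_eq_conj_mul_self] at h0
  exact_mod_cast Complex.normSq_eq_zero.mp (by exact_mod_cast h0)

/-- If families of PSD matrices `X_a`, `Y_a` both sum to `K` with `⟨K,K⟩ = 1` and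
`∑ₐ ⟨Xₐ, Yₐ⟩ = 1`, then `Xₐ = Yₐ` for all `a`. -/
theorem stmt_2 {A : Type*} [Fintype A] {d : ℕ}
    (X Y : A → Matrix (Fin d) (Fin d) ℂ) (K : Matrix (Fin d) (Fin d) ℂ)
    (hX : ∀ a, (X a).PosSemidef) (hY : ∀ a, (Y a).PosSemidef)
    (hXK : ∑ a, X a = K) (hYK : ∑ a, Y a = K)
    (hKK : Matrix.trace (Kᴴ * K) = 1)
    (hsum : ∑ a, Matrix.trace ((X a)ᴴ * Y a) = 1) :
    ∀ a, X a = Y a := by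
  -- expansion of ⟨K,K⟩ over any pair of families summing to K
  have expand : ∀ (U V : A → Matrix (Fin d) (Fin d) ℂ),
      (∑ a, U a = K) → (∑ a, V a = K) →
      ∑ a, ∑ b, ((U a)ᴴ * V b).trace = 1 := by
    intro U V hU hV
    have hk : ((∑ a, U a)ᴴ * (∑ a, V a)).trace = 1 := by rw [hU, hV, hKK]
    rw [← hk, conjTranspose_sum, Finset.sum_mul_sum, Matrix.trace_sum]
    simp [Matrix.trace_sum]
  -- diagonal sums are ≤ 1
  have diag_le : ∀ (U V : A → Matrix (Fin d) (Fin d) ℂ),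
      (∀ a, (U a).PosSemidef) → (∀ a, (V a).PosSemidef) →
      (∑ a, U a = K) → (∑ a, V a = K) →
      ∑ a, ((U a)ᴴ * V a).trace ≤ 1 := by
    intro U V hUp hVp hU hV
    rw [← expand U V hU hV]
    apply Finset.sum_le_sum
    intro a _
    exact Finset.single_le_sum (f := fun b => ((U a)ᴴ * V b).trace)
      (fun b _ => trace_mul_psd_nonneg (hUp a) (hVp b)) (Finset.mem_univ a)
  have hXX := diag_le X X hX hX hXK hXK
  have hYY := diag_le Y Y hY hY hYK hYK
  -- ∑ ⟨Yₐ, Xₐ⟩ = 1 as well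
  have hYX : ∑ a, ((Y a)ᴴ * X a).trace = 1 := by
    rw [← hsum]
    apply Finset.sum_congr rfl
    intro a _
    rw [(hY a).1, (hX a).1, Matrix.trace_mul_comm]
  -- the sum of squared norms of differences
  set S : ℂ := ∑ a, ((X a - Y a)ᴴ * (X a - Y a)).trace with hS
  have hterm : ∀ a, ((X a - Y a)ᴴ * (X a - Y a)).trace =
      ((X a)ᴴ * X a).trace - ((X a)ᴴ * Y a).trace
        - ((Y a)ᴴ * X a).trace + ((Y a)ᴴ * Y a).trace := by
    intro a
    simp only [conjTranspose_sub, sub_mul, mul_sub, Matrix.trace_sub]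
    ring
  have hSval : S = (∑ a, ((X a)ᴴ * X a).trace) + (∑ a, ((Y a)ᴴ * Y a).trace) - 2 := by
    rw [hS]
    simp_rw [hterm]
    rw [Finset.sum_add_distrib, Finset.sum_sub_distrib, Finset.sum_sub_distrib, hsum, hYX]
    ring
  have hSle : S ≤ 0 := by
    rw [hSval]
    have := add_le_add hXX hYY
    linear_combination this
  have hSge : 0 ≤ S := Finset.sum_nonneg fun a _ =>
    psd_trace_nonneg (Matrix.posSemidef_conjTranspose_mul_self _)
  have hS0 : S = 0 := le_antisymm hSle hSge
  intro a
  have h0 := (Finset.sum_eq_zero_iff_of_nonneg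
    (fun a _ => psd_trace_nonneg (d := d)
      (Matrix.posSemidef_conjTranspose_mul_self (X a - Y a)))).mp hS0 a (Finset.mem_univ a)
  have := eq_zero_of_trace_conjTranspose_mul_self h0
  exact sub_eq_zero.mp this
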